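/- Let δ > 0, let α_{m+1} be a generator of P_{m+1}, let C_m ⊆ U_m ∩ {c ∈ O_F : |c| ≤ c₁|α_{m+1}|, |σ(c)| ≤ c₂|σ(α_{m+1})|} contain a representative of every nonzero residue class of O_F modulo P_{m+1}, and let G_m = {g} with g ∈ U_m, |g| ≤ δ·N(P_{m+1})^(1/8) and |σ(g)| ≤ δ·N(P_{m+1})^(1/8). If N(P_{m+1}) > (δ√(c₁c₂)/2 + √(c₁c₂δ²/4 + √(c₁c₂)))⁸, then C_mG_m ⊆ C_m·U′₁: for every c ∈ C_m there exist c̃ ∈ C_m and u ∈ U′₁ with c·g = c̃·u. -/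

import Mathlib

open IntermediateField NumberField

noncomputable section

/-- `β = i·√(D + B√D)` (positive real square roots). -/
def qβ (B D : ℕ) : ℂ :=
  Complex.I * ((Real.sqrt ((D : ℝ) + (B : ℝ) * Real.sqrt (D : ℝ)) : ℝ) : ℂ)

/-- `β₃ = i·√(D − B√D)`. -/
def qβ₃ (B D : ℕ) : ℂ :=
  Complex.I * ((Real.sqrt ((D : ℝ) - (B : ℝ) * Real.sqrt (D : ℝ)) : ℝ) : ℂ)

/-- The imaginary cyclic quartic field `F = ℚ(β) = ℚ(√(−(D + B√D))) ⊆ ℂ`. -/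
def qF (B D : ℕ) : IntermediateField ℚ ℂ := ℚ⟮qβ B D⟯

/-- The complex absolute value of an element of `F`, via the inclusion `F ⊆ ℂ`. -/
def qAbs {B D : ℕ} (x : qF B D) : ℝ := ‖(x : ℂ)‖

/-- `x` is an `S`-unit of `F`: `x ≠ 0` and `x` has valuation zero at every nonzero prime
ideal of `O_F` not belonging to `S`. -/
def IsSUnit {B D : ℕ} (S : Set (Ideal (𝓞 (qF B D)))) (x : qF B D) : Prop :=
  x ≠ 0 ∧ ∀ P : Ideal (𝓞 (qF B D)), P.IsPrime → P ≠ ⊥ → P ∉ S →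
    ∃ u v : 𝓞 (qF B D), u ∉ P ∧ v ∉ P ∧ x * (v : qF B D) = (u : qF B D)

variable {B C D : ℕ} (hB : 0 < B) (hC : 0 < C) (hD : D = B ^ 2 + C ^ 2)

lemma sqrtD_pos (hB : 0 < B) (hC : 0 < C) (hD : D = B ^ 2 + C ^ 2) :
    0 < Real.sqrt D := by
  apply Real.sqrt_pos.2
  have : 0 < D := by subst hD; positivity
  exact_mod_cast this

lemma r1_pos (hB : 0 < B) (hC : 0 < C) (hD : D = B ^ 2 + C ^ 2) :
    0 < (D : ℝ) + (B : ℝ) * Real.sqrt D := by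
  have h1 := sqrtD_pos hB hC hD
  have h2 : 0 < D := by subst hD; positivity
  have : (0:ℝ) < D := by exact_mod_cast h2
  positivity

lemma r3_pos (hB : 0 < B) (hC : 0 < C) (hD : D = B ^ 2 + C ^ 2) :
    0 < (D : ℝ) - (B : ℝ) * Real.sqrt D := by
  have h1 := sqrtD_pos hB hC hD
  have hs : Real.sqrt D ^ 2 = (D:ℝ) := Real.sq_sqrt (by positivity)
  have hBD : (B:ℝ)^2 < (D:ℝ) := by
    have : (B:ℝ)^2 + (C:ℝ)^2 = D := by push_cast [hD]; ring
    nlinarith [sq_nonneg (C:ℝ), hC, (show (1:ℝ) ≤ C by exact_mod_cast hC)]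
  nlinarith [h1, hs, (show (0:ℝ) ≤ B by positivity)]

lemma qβ_sq' (h : 0 ≤ (D : ℝ) + (B : ℝ) * Real.sqrt D) :
    (qβ B D) ^ 2 = -((((D : ℝ) + (B : ℝ) * Real.sqrt D : ℝ) : ℂ)) := by
  unfold qβ
  have hs : ((Real.sqrt ((D:ℝ) + (B:ℝ) * Real.sqrt D) : ℝ) : ℂ) ^ 2
      = (((D:ℝ) + (B:ℝ) * Real.sqrt D : ℝ) : ℂ) := by
    rw [← Complex.ofReal_pow, Real.sq_sqrt h]
  rw [mul_pow, Complex.I_sq, hs]; ring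

lemma qβ₃_sq' (h : 0 ≤ (D : ℝ) - (B : ℝ) * Real.sqrt D) :
    (qβ₃ B D) ^ 2 = -((((D : ℝ) - (B : ℝ) * Real.sqrt D : ℝ) : ℂ)) := by
  unfold qβ₃
  have hs : ((Real.sqrt ((D:ℝ) - (B:ℝ) * Real.sqrt D) : ℝ) : ℂ) ^ 2
      = (((D:ℝ) - (B:ℝ) * Real.sqrt D : ℝ) : ℂ) := by
    rw [← Complex.ofReal_pow, Real.sq_sqrt h]
  rw [mul_pow, Complex.I_sq, hs]; ring

def qpoly (C D : ℕ) : Polynomial ℚ :=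
  Polynomial.X ^ 4 + Polynomial.C ((2 * D : ℕ) : ℚ) * Polynomial.X ^ 2
    + Polynomial.C ((C ^ 2 * D : ℕ) : ℚ)

lemma qpoly_monic : (qpoly C D).Monic := by unfold qpoly; monicity!

lemma qpoly_natDegree_le : (qpoly C D).natDegree ≤ 4 := by unfold qpoly; compute_degree!

lemma qβ_aeval (hB : 0 < B) (hC : 0 < C) (hD : D = B ^ 2 + C ^ 2) :
    Polynomial.aeval (qβ B D) (qpoly C D) = 0 := by
  rw [qpoly, Polynomial.aeval_def]
  have h2 := qβ_sq' (le_of_lt (r1_pos hB hC hD))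
  have hs : Real.sqrt (D:ℝ) ^ 2 = (D:ℝ) := Real.sq_sqrt (by positivity)
  simp only [Polynomial.eval₂_add, Polynomial.eval₂_mul, Polynomial.eval₂_X_pow,
    Polynomial.eval₂_C]
  have h4 : (qβ B D) ^ 4 = ((((D : ℝ) + (B : ℝ) * Real.sqrt D : ℝ) : ℂ)) ^ 2 := by
    rw [show (4:ℕ) = 2 * 2 by rfl, pow_mul, h2]; ring
  rw [h4, h2]
  have key : ((D : ℝ) + (B : ℝ) * Real.sqrt D) ^ 2
      + (2 * D : ℕ) * (-((D : ℝ) + (B : ℝ) * Real.sqrt D)) + ((C ^ 2 * D : ℕ) : ℝ) = 0 := by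
    have hDr : (D:ℝ) = (B:ℝ)^2 + (C:ℝ)^2 := by exact_mod_cast congrArg (Nat.cast : ℕ → ℝ) hD
    have h2D : ((2 * D : ℕ) : ℝ) = 2 * (D : ℝ) := by push_cast; ring
    have hCD : ((C ^ 2 * D : ℕ) : ℝ) = (C:ℝ)^2 * (D:ℝ) := by push_cast; ring
    rw [h2D, hCD]
    nlinarith [hs, hDr]
  calc (((D : ℝ) + (B : ℝ) * Real.sqrt D : ℝ) : ℂ) ^ 2
        + ((2 * D : ℕ) : ℚ) * (-(((D : ℝ) + (B : ℝ) * Real.sqrt D : ℝ) : ℂ))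
        + ((C ^ 2 * D : ℕ) : ℚ)
      = ((((D : ℝ) + (B : ℝ) * Real.sqrt D) ^ 2
        + (2 * D : ℕ) * (-((D : ℝ) + (B : ℝ) * Real.sqrt D)) + ((C ^ 2 * D : ℕ) : ℝ) : ℝ) : ℂ) := by
        push_cast; ring
    _ = 0 := by rw [key]; norm_num

lemma qβ_integral (hB : 0 < B) (hC : 0 < C) (hD : D = B ^ 2 + C ^ 2) :
    IsIntegral ℚ (qβ B D) :=
  ⟨qpoly C D, qpoly_monic, by
    have := qβ_aeval hB hC hD; rwa [Polynomial.aeval_def] at this⟩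

lemma qF_fd (hB : 0 < B) (hC : 0 < C) (hD : D = B ^ 2 + C ^ 2) :
    FiniteDimensional ℚ (qF B D) :=
  IntermediateField.adjoin.finiteDimensional (qβ_integral hB hC hD)

lemma qF_nf (hB : 0 < B) (hC : 0 < C) (hD : D = B ^ 2 + C ^ 2) :
    NumberField (qF B D) :=
  { to_charZero := inferInstance, to_finiteDimensional := qF_fd hB hC hD }

lemma qF_finrank_le (hB : 0 < B) (hC : 0 < C) (hD : D = B ^ 2 + C ^ 2) :
    Module.finrank ℚ (qF B D) ≤ 4 := by
  have hint := qβ_integral hB hC hD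
  have h := IntermediateField.adjoin.finrank hint
  rw [show qF B D = ℚ⟮qβ B D⟯ from rfl, h]
  have hdvd : minpoly ℚ (qβ B D) ∣ qpoly C D := by
    apply minpoly.dvd
    exact qβ_aeval hB hC hD
  have hne : qpoly C D ≠ 0 := (qpoly_monic).ne_zero
  have := Polynomial.natDegree_le_of_dvd hdvd hne
  exact le_trans this qpoly_natDegree_le

section Embeddings

def qgen (B D : ℕ) : qF B D := ⟨qβ B D, mem_adjoin_simple_self ℚ (qβ B D)⟩

def qconj : ℂ →ₐ[ℚ] ℂ := (Complex.conjAe.toAlgHom.restrictScalars ℚ)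

@[simp] lemma qconj_apply (z : ℂ) : qconj z = (starRingEnd ℂ) z := rfl

def qφ₁ (B D : ℕ) : qF B D →ₐ[ℚ] ℂ := (qF B D).val

def qφ₂ (B D : ℕ) : qF B D →ₐ[ℚ] ℂ := qconj.comp (qφ₁ B D)

variable (σ : qF B D ≃ₐ[ℚ] qF B D)

def qφ₃ : qF B D →ₐ[ℚ] ℂ := (qφ₁ B D).comp σ.toAlgHom

def qφ₄ : qF B D →ₐ[ℚ] ℂ := qconj.comp (qφ₃ σ)

lemma conj_qβ : (starRingEnd ℂ) (qβ B D) = -(qβ B D) := by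
  unfold qβ; rw [map_mul, Complex.conj_I, Complex.conj_ofReal]; ring

lemma conj_qβ₃ : (starRingEnd ℂ) (qβ₃ B D) = -(qβ₃ B D) := by
  unfold qβ₃; rw [map_mul, Complex.conj_I, Complex.conj_ofReal]; ring

lemma qφ₁_gen : qφ₁ B D (qgen B D) = qβ B D := rfl

lemma qφ₂_gen : qφ₂ B D (qgen B D) = -(qβ B D) := by
  show qconj (qφ₁ B D (qgen B D)) = _
  rw [qφ₁_gen, qconj_apply, conj_qβ]

lemma qφ₃_gen (hσ : ((σ ⟨qβ B D, mem_adjoin_simple_self ℚ (qβ B D)⟩ : qF B D) : ℂ) = -(qβ₃ B D)) :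
    qφ₃ σ (qgen B D) = -(qβ₃ B D) := hσ

lemma qφ₄_gen (hσ : ((σ ⟨qβ B D, mem_adjoin_simple_self ℚ (qβ B D)⟩ : qF B D) : ℂ) = -(qβ₃ B D)) :
    qφ₄ σ (qgen B D) = qβ₃ B D := by
  show qconj (qφ₃ σ (qgen B D)) = _
  rw [qφ₃_gen σ hσ, qconj_apply, map_neg, conj_qβ₃]; ring

end Embeddings

section Distinct

variable (hB : 0 < B) (hC : 0 < C) (hD : D = B ^ 2 + C ^ 2)

lemma qβ_im : (qβ B D).im = Real.sqrt ((D : ℝ) + (B : ℝ) * Real.sqrt D) := by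
  simp [qβ, Complex.mul_im]

lemma qβ₃_im : (qβ₃ B D).im = Real.sqrt ((D : ℝ) - (B : ℝ) * Real.sqrt D) := by
  simp [qβ₃, Complex.mul_im]

lemma qvals_ne (hB : 0 < B) (hC : 0 < C) (hD : D = B ^ 2 + C ^ 2) :
    qβ B D ≠ -qβ B D ∧ qβ B D ≠ -qβ₃ B D ∧ qβ B D ≠ qβ₃ B D ∧
    (-qβ B D ≠ -qβ₃ B D ∧ -qβ B D ≠ qβ₃ B D ∧ -qβ₃ B D ≠ qβ₃ B D) := by
  have h1 := r1_pos hB hC hD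
  have h3 := r3_pos hB hC hD
  have hr1 : 0 < Real.sqrt ((D : ℝ) + (B : ℝ) * Real.sqrt D) := Real.sqrt_pos.2 h1
  have hr3 : 0 < Real.sqrt ((D : ℝ) - (B : ℝ) * Real.sqrt D) := Real.sqrt_pos.2 h3
  have hs : 0 < (B : ℝ) * Real.sqrt D := by
    have := sqrtD_pos hB hC hD
    have hb : (0:ℝ) < B := by exact_mod_cast hB
    positivity
  have hne : Real.sqrt ((D : ℝ) + (B : ℝ) * Real.sqrt D)
      ≠ Real.sqrt ((D : ℝ) - (B : ℝ) * Real.sqrt D) := by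
    intro h
    have e1 := Real.sq_sqrt h1.le
    have e3 := Real.sq_sqrt h3.le
    rw [h] at e1
    nlinarith
  refine ⟨?_, ?_, ?_, ?_, ?_, ?_⟩ <;> intro h <;>
    have him := congrArg Complex.im h <;>
    simp only [Complex.neg_im, qβ_im, qβ₃_im] at him <;>
    first
      | exact hne him
      | exact hne (by linarith)
      | nlinarith [hr1, hr3]

end Distinct

lemma qnorm_eq (hB : 0 < B) (hC : 0 < C) (hD : D = B ^ 2 + C ^ 2)
    (σ : qF B D ≃ₐ[ℚ] qF B D)
    (hσ : ((σ ⟨qβ B D, mem_adjoin_simple_self ℚ (qβ B D)⟩ : qF B D) : ℂ) = -(qβ₃ B D))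
    (x : qF B D) :
    ((Algebra.norm ℚ x : ℚ) : ℝ) = qAbs x ^ 2 * qAbs (σ x) ^ 2 := by
  haveI : FiniteDimensional ℚ (qF B D) := qF_fd hB hC hD
  classical
  -- the four embeddings are distinct
  obtain ⟨n12, n13, n14, n23, n24, n34⟩ :=
    (by
      obtain ⟨a, b, c, d, e, f⟩ := qvals_ne hB hC hD
      refine ⟨?_, ?_, ?_, ?_, ?_, ?_⟩
      · exact fun h => a (by rw [← qφ₂_gen (B := B) (D := D), ← h, qφ₁_gen])
      · exact fun h => b (by rw [← qφ₃_gen σ hσ, ← h, qφ₁_gen])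
      · exact fun h => c (by rw [← qφ₄_gen σ hσ, ← h, qφ₁_gen])
      · exact fun h => d (by rw [← qφ₃_gen σ hσ, ← h, qφ₂_gen])
      · exact fun h => e (by rw [← qφ₄_gen σ hσ, ← h, qφ₂_gen])
      · exact fun h => f (by rw [← qφ₃_gen σ hσ, h, qφ₄_gen σ hσ])
      : qφ₁ B D ≠ qφ₂ B D ∧ qφ₁ B D ≠ qφ₃ σ ∧ qφ₁ B D ≠ qφ₄ σ ∧
        qφ₂ B D ≠ qφ₃ σ ∧ qφ₂ B D ≠ qφ₄ σ ∧ qφ₃ σ ≠ qφ₄ σ)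
  set s : Finset (qF B D →ₐ[ℚ] ℂ) := {qφ₁ B D, qφ₂ B D, qφ₃ σ, qφ₄ σ} with hs
  have hscard : s.card = 4 := by
    rw [hs]
    rw [Finset.card_insert_of_notMem (by simp [n12, n13, n14]),
      Finset.card_insert_of_notMem (by simp [n23, n24]),
      Finset.card_insert_of_notMem (by simp [n34]), Finset.card_singleton]
  have hcard : Fintype.card (qF B D →ₐ[ℚ] ℂ) = Module.finrank ℚ (qF B D) := AlgHom.card ℚ _ ℂ
  have huniv : (Finset.univ : Finset (qF B D →ₐ[ℚ] ℂ)) = s := by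
    symm
    apply Finset.eq_univ_of_card
    rw [hscard, hcard]
    refine le_antisymm ?_ (qF_finrank_le hB hC hD)
    calc 4 = s.card := hscard.symm
      _ ≤ Fintype.card (qF B D →ₐ[ℚ] ℂ) := Finset.card_le_univ s
      _ = _ := hcard
  have hprod := Algebra.norm_eq_prod_embeddings ℚ ℂ x
  rw [huniv, hs] at hprod
  rw [Finset.prod_insert (by simp [n12, n13, n14]),
    Finset.prod_insert (by simp [n23, n24]),
    Finset.prod_insert (by simp [n34]), Finset.prod_singleton] at hprod
  have hφ₂ : qφ₂ B D x = (starRingEnd ℂ) ((x : ℂ)) := rfl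
  have hφ₃ : qφ₃ σ x = ((σ x : qF B D) : ℂ) := rfl
  have hφ₄ : qφ₄ σ x = (starRingEnd ℂ) ((σ x : qF B D) : ℂ) := rfl
  have hφ₁ : qφ₁ B D x = (x : ℂ) := rfl
  rw [hφ₁, hφ₂, hφ₃, hφ₄] at hprod
  have key : (x : ℂ) * ((starRingEnd ℂ) ((x : ℂ)) * (((σ x : qF B D) : ℂ) *
      (starRingEnd ℂ) ((σ x : qF B D) : ℂ))) = ((qAbs x ^ 2 * qAbs (σ x) ^ 2 : ℝ) : ℂ) := by
    calc (x : ℂ) * ((starRingEnd ℂ) ((x : ℂ)) * (((σ x : qF B D) : ℂ) *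
        (starRingEnd ℂ) ((σ x : qF B D) : ℂ)))
        = ((x : ℂ) * (starRingEnd ℂ) ((x : ℂ))) * (((σ x : qF B D) : ℂ) *
          (starRingEnd ℂ) ((σ x : qF B D) : ℂ)) := by ring
      _ = ((qAbs x ^ 2 * qAbs (σ x) ^ 2 : ℝ) : ℂ) := by
          rw [Complex.mul_conj, Complex.mul_conj, ← Complex.sq_norm, ← Complex.sq_norm]
          push_cast
          rfl
  rw [key] at hprod
  have : ((Algebra.norm ℚ x : ℚ) : ℂ) = ((qAbs x ^ 2 * qAbs (σ x) ^ 2 : ℝ) : ℂ) := by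
    rw [← hprod]; norm_num
  exact_mod_cast this

lemma qcard_span (hB : 0 < B) (hC : 0 < C) (hD : D = B ^ 2 + C ^ 2)
    (σ : qF B D ≃ₐ[ℚ] qF B D)
    (hσ : ((σ ⟨qβ B D, mem_adjoin_simple_self ℚ (qβ B D)⟩ : qF B D) : ℂ) = -(qβ₃ B D))
    (w : 𝓞 (qF B D)) :
    (Nat.card (𝓞 (qF B D) ⧸ Ideal.span {w}) : ℝ)
      = qAbs ((w : qF B D)) ^ 2 * qAbs (σ ((w : qF B D))) ^ 2 := by
  haveI : NumberField (qF B D) := qF_nf hB hC hD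
  have h1 : Nat.card (𝓞 (qF B D) ⧸ Ideal.span {w}) = Ideal.absNorm (Ideal.span {w}) :=
    (Submodule.cardQuot_apply _).symm
  rw [h1, Ideal.absNorm_span_singleton]
  have h2 : ((((Algebra.norm ℤ w).natAbs : ℕ)) : ℝ) = |((Algebra.norm ℤ w : ℤ) : ℝ)| := by
    rw [Nat.cast_natAbs, Int.cast_abs]
  rw [h2]
  have h3 : ((Algebra.norm ℤ w : ℤ) : ℝ) = ((Algebra.norm ℚ ((w : qF B D)) : ℚ) : ℝ) := by
    rw_mod_cast [Algebra.coe_norm_int w]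
  rw [h3, qnorm_eq hB hC hD σ hσ]
  have : (0:ℝ) ≤ qAbs ((w : qF B D)) ^ 2 * qAbs (σ ((w : qF B D))) ^ 2 := by positivity
  exact abs_of_nonneg this

lemma qcard_le (hB : 0 < B) (hC : 0 < C) (hD : D = B ^ 2 + C ^ 2)
    (w : 𝓞 (qF B D)) (hw : w ≠ 0) (Q : Ideal (𝓞 (qF B D))) (hwQ : w ∈ Q) :
    Nat.card (𝓞 (qF B D) ⧸ Q) ≤ Nat.card (𝓞 (qF B D) ⧸ Ideal.span {w}) := by
  haveI : NumberField (qF B D) := qF_nf hB hC hD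
  have hle : Ideal.span {w} ≤ Q := (Ideal.span_singleton_le_iff_mem Q).2 hwQ
  have hdvd := Ideal.absNorm_dvd_absNorm_of_le hle
  have hne : Ideal.absNorm (Ideal.span {w}) ≠ 0 := by
    rw [Ideal.absNorm_span_singleton]
    simpa using (Algebra.norm_ne_zero_iff (R := ℤ)).2 hw
  have := Nat.le_of_dvd (Nat.pos_of_ne_zero hne) hdvd
  rwa [Ideal.absNorm_apply, Submodule.cardQuot_apply, Ideal.absNorm_apply,
    Submodule.cardQuot_apply] at this

lemma IsSUnit.mul {S : Set (Ideal (𝓞 (qF B D)))} {x y : qF B D}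
    (hx : IsSUnit S x) (hy : IsSUnit S y) : IsSUnit S (x * y) := by
  refine ⟨mul_ne_zero hx.1 hy.1, fun Q hQp hQb hQS => ?_⟩
  obtain ⟨u₁, v₁, hu₁, hv₁, he₁⟩ := hx.2 Q hQp hQb hQS
  obtain ⟨u₂, v₂, hu₂, hv₂, he₂⟩ := hy.2 Q hQp hQb hQS
  refine ⟨u₁ * u₂, v₁ * v₂, ?_, ?_, ?_⟩
  · exact fun h => ((hQp.mem_or_mem h).elim hu₁ hu₂)
  · exact fun h => ((hQp.mem_or_mem h).elim hv₁ hv₂)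
  · push_cast
    calc x * y * ((v₁ : qF B D) * v₂) = (x * v₁) * (y * v₂) := by ring
      _ = (u₁ : qF B D) * u₂ := by rw [he₁, he₂]

lemma IsSUnit.div {S : Set (Ideal (𝓞 (qF B D)))} {x y : qF B D}
    (hx : IsSUnit S x) (hy : IsSUnit S y) : IsSUnit S (x / y) := by
  refine ⟨div_ne_zero hx.1 hy.1, fun Q hQp hQb hQS => ?_⟩
  obtain ⟨u₁, v₁, hu₁, hv₁, he₁⟩ := hx.2 Q hQp hQb hQS
  obtain ⟨u₂, v₂, hu₂, hv₂, he₂⟩ := hy.2 Q hQp hQb hQS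
  refine ⟨u₁ * v₂, v₁ * u₂, ?_, ?_, ?_⟩
  · exact fun h => ((hQp.mem_or_mem h).elim hu₁ hv₂)
  · exact fun h => ((hQp.mem_or_mem h).elim hv₁ hu₂)
  · push_cast
    field_simp [hy.1]
    linear_combination (u₂ : qF B D) * he₁ - (u₁ : qF B D) * he₂

lemma isSUnit_coe {S : Set (Ideal (𝓞 (qF B D)))} {w : 𝓞 (qF B D)} (hw : w ≠ 0)
    (h : ∀ Q : Ideal (𝓞 (qF B D)), Q.IsPrime → Q ≠ ⊥ → Q ∉ S → w ∉ Q) :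
    IsSUnit S ((w : qF B D)) := by
  refine ⟨NumberField.RingOfIntegers.coe_ne_zero_iff.2 hw, fun Q hQp hQb hQS => ?_⟩
  exact ⟨w, 1, h Q hQp hQb hQS, fun h1 => hQp.1 ((Ideal.eq_top_iff_one Q).2 h1), by push_cast; ring⟩

lemma isSUnit_coe_not_mem {S : Set (Ideal (𝓞 (qF B D)))} {w : 𝓞 (qF B D)}
    (h : IsSUnit S ((w : qF B D))) {Q : Ideal (𝓞 (qF B D))} (hQp : Q.IsPrime) (hQb : Q ≠ ⊥)
    (hQS : Q ∉ S) : w ∉ Q := by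
  obtain ⟨u, v, hu, hv, he⟩ := h.2 Q hQp hQb hQS
  intro hwQ
  have : w * v = u := by
    apply NumberField.RingOfIntegers.coe_injective
    push_cast
    exact_mod_cast he
  exact hu (this ▸ Ideal.mul_mem_right v Q hwQ)

lemma qnumeric (c₁ c₂ δ N : ℝ) (hc₁ : 0 < c₁) (hc₂ : 0 < c₂) (hδ : 0 < δ) (hN : 0 ≤ N)
    (hbig : (δ * Real.sqrt (c₁ * c₂) / 2 +
        Real.sqrt (c₁ * c₂ * δ ^ 2 / 4 + Real.sqrt (c₁ * c₂))) ^ 8 < N) :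
    c₁ ^ 2 * c₂ ^ 2 * (δ * N ^ ((1 : ℝ) / 8) + 1) ^ 4 < N := by
  set k := Real.sqrt (c₁ * c₂) with hk
  have hkpos : 0 < k := Real.sqrt_pos.2 (by positivity)
  have hk2 : k ^ 2 = c₁ * c₂ := Real.sq_sqrt (by positivity)
  set x := N ^ ((1 : ℝ) / 8) with hx
  have hxnn : 0 ≤ x := Real.rpow_nonneg hN _
  have hx8 : x ^ (8 : ℕ) = N := by
    rw [hx, ← Real.rpow_natCast (N ^ ((1:ℝ)/8)) 8, ← Real.rpow_mul hN]
    norm_num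
  set r := Real.sqrt (c₁ * c₂ * δ ^ 2 / 4 + k) with hr
  have hrnn : 0 ≤ r := Real.sqrt_nonneg _
  have hr2 : r ^ 2 = c₁ * c₂ * δ ^ 2 / 4 + k := Real.sq_sqrt (by positivity)
  have hA : 0 ≤ δ * k / 2 + r := by positivity
  have hAx : δ * k / 2 + r < x := by
    by_contra hcon
    push_neg at hcon
    have := pow_le_pow_left₀ hxnn hcon 8
    rw [hx8] at this
    linarith
  have hkey : k * (δ * x + 1) < x ^ 2 := by
    have h1 : r < x - k * δ / 2 := by linarith
    have h2 : r ^ 2 < (x - k * δ / 2) ^ 2 := by nlinarith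
    nlinarith [hk2, hr2]
  have h4 : (k * (δ * x + 1)) ^ 4 < (x ^ 2) ^ 4 := by
    apply pow_lt_pow_left₀ hkey (by positivity)
    norm_num
  calc c₁ ^ 2 * c₂ ^ 2 * (δ * x + 1) ^ 4 = (k * (δ * x + 1)) ^ 4 := by
        rw [mul_pow]; rw [show k ^ 4 = (k ^ 2) ^ 2 by ring, hk2]; ring
    _ < (x ^ 2) ^ 4 := h4
    _ = N := by rw [← hx8]; ring

lemma qAbs_mul (x y : qF B D) : qAbs (x * y) = qAbs x * qAbs y := by
  unfold qAbs; push_cast; exact norm_mul _ _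

lemma qAbs_nonneg (x : qF B D) : 0 ≤ qAbs x := norm_nonneg _

lemma qAbs_pos {x : qF B D} (hx : x ≠ 0) : 0 < qAbs x := by
  unfold qAbs
  apply norm_pos_iff.mpr
  exact fun h => hx (by exact_mod_cast h)

lemma qAbs_sub_le (x y : qF B D) : qAbs (x - y) ≤ qAbs x + qAbs y := by
  unfold qAbs
  push_cast
  calc ‖(x : ℂ) - (y : ℂ)‖ ≤ ‖(x : ℂ)‖ + ‖(-(y : ℂ))‖ := by
        rw [sub_eq_add_neg]; exact norm_add_le _ _
    _ = ‖(x : ℂ)‖ + ‖(y : ℂ)‖ := by rw [norm_neg]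


set_option maxHeartbeats 2000000 in
/-- condition II holds below the theoretical bound.  Let `δ > 0`, let
`αm` generate `P (m+1)`, let `C_m` be a set of `S_m`-units of `O_F` bounded by
`|c| ≤ c₁|αm|`, `|σ(c)| ≤ c₂|σ(αm)|` containing a representative of every nonzero residue
class mod `P (m+1)`, and let `G_m = {g}` with `g ∈ U_m`, `|g| ≤ δ·N(P (m+1))^(1/8)` and
`|σ(g)| ≤ δ·N(P (m+1))^(1/8)`.  If
`N(P (m+1)) > (δ√(c₁c₂)/2 + √(c₁c₂δ²/4 + √(c₁c₂)))⁸`, then for every `c ∈ C_m` there are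
`c̃ ∈ C_m` and `u ∈ U′₁` with `c·g = c̃·u`. -/
theorem statement16 (B C D : ℕ) (hB : 0 < B) (hC : 0 < C) (hD : D = B ^ 2 + C ^ 2)
    (hsf : Squarefree D)
    (σ : qF B D ≃ₐ[ℚ] qF B D)
    (hσ : ((σ ⟨qβ B D, mem_adjoin_simple_self ℚ (qβ B D)⟩ : qF B D) : ℂ) = -(qβ₃ B D))
    (hPID : ∀ I : Ideal (𝓞 (qF B D)), I.IsPrincipal)
    (c₁ c₂ : ℝ) (hc₁ : 0 < c₁) (hc₂ : 0 < c₂)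
    (hc : ∀ α x : 𝓞 (qF B D), α ≠ 0 →
      ∃ y : 𝓞 (qF B D),
        qAbs (((x - α * y : 𝓞 (qF B D)) : qF B D)) ≤ c₁ * qAbs ((α : qF B D)) ∧
        qAbs (σ ((x - α * y : 𝓞 (qF B D)) : qF B D)) ≤ c₂ * qAbs (σ ((α : qF B D))))
    (P : ℕ → Ideal (𝓞 (qF B D)))
    (hPprime : ∀ i, 1 ≤ i → (P i).IsPrime ∧ P i ≠ ⊥)
    (hPinj : ∀ i j, 1 ≤ i → 1 ≤ j → P i = P j → i = j)
    (hPsurj : ∀ Q : Ideal (𝓞 (qF B D)), Q.IsPrime → Q ≠ ⊥ → ∃ i, 1 ≤ i ∧ P i = Q)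
    (hPmono : ∀ i j, 1 ≤ i → i ≤ j →
      Nat.card (𝓞 (qF B D) ⧸ P i) ≤ Nat.card (𝓞 (qF B D) ⧸ P j))
    (m : ℕ)
    (δ : ℝ) (hδ : 0 < δ)
    (αm : 𝓞 (qF B D)) (hαm : P (m + 1) = Ideal.span {αm})
    (Cm : Set (𝓞 (qF B D)))
    (hCsub : ∀ c ∈ Cm,
      IsSUnit {Q | ∃ i, 1 ≤ i ∧ i ≤ m ∧ Q = P i} ((c : qF B D)) ∧
      qAbs ((c : qF B D)) ≤ c₁ * qAbs ((αm : qF B D)) ∧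
      qAbs (σ ((c : qF B D))) ≤ c₂ * qAbs (σ ((αm : qF B D))))
    (hCrep : ∀ x : 𝓞 (qF B D), x ∉ P (m + 1) → ∃ c ∈ Cm, x - c ∈ P (m + 1))
    (g : 𝓞 (qF B D))
    (hg : IsSUnit {Q | ∃ i, 1 ≤ i ∧ i ≤ m ∧ Q = P i} ((g : qF B D)))
    (hgabs : qAbs ((g : qF B D)) ≤
      δ * (Nat.card (𝓞 (qF B D) ⧸ P (m + 1)) : ℝ) ^ ((1 : ℝ) / 8))
    (hσgabs : qAbs (σ ((g : qF B D))) ≤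
      δ * (Nat.card (𝓞 (qF B D) ⧸ P (m + 1)) : ℝ) ^ ((1 : ℝ) / 8))
    (hbig : (δ * Real.sqrt (c₁ * c₂) / 2 +
        Real.sqrt (c₁ * c₂ * δ ^ 2 / 4 + Real.sqrt (c₁ * c₂))) ^ 8 <
      (Nat.card (𝓞 (qF B D) ⧸ P (m + 1)) : ℝ)) :
    ∀ c ∈ Cm, ∃ ct ∈ Cm, ∃ u : (qF B D)ˣ,
      u ∈ Subgroup.closure {u : (qF B D)ˣ |
        IsSUnit {Q | ∃ i, 1 ≤ i ∧ i ≤ m ∧ Q = P i} ((u : qF B D)) ∧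
        ∃ t : qF B D, IsSUnit {Q | ∃ i, 1 ≤ i ∧ i ≤ m ∧ Q = P i} t ∧
          (u : qF B D) = 1 + ((αm : 𝓞 (qF B D)) : qF B D) * t} ∧
      ((c : 𝓞 (qF B D)) : qF B D) * ((g : 𝓞 (qF B D)) : qF B D) =
        ((ct : 𝓞 (qF B D)) : qF B D) * (u : qF B D) := by
  haveI : NumberField (qF B D) := qF_nf hB hC hD
  intro c hcCm
  set S : Set (Ideal (𝓞 (qF B D))) := {Q | ∃ i, 1 ≤ i ∧ i ≤ m ∧ Q = P i} with hS
  obtain ⟨hcS, hcb, hσcb⟩ := hCsub c hcCm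
  obtain ⟨hPp, hPb⟩ := hPprime (m + 1) (by omega)
  have hPnotS : P (m + 1) ∉ S := by
    rintro ⟨i, hi1, him, he⟩
    have := hPinj (m + 1) i (by omega) hi1 he
    omega
  have hαm_ne : αm ≠ 0 := by
    intro h0
    apply hPb
    rw [hαm, h0, Ideal.span_singleton_eq_bot]
  have hαmF_ne : ((αm : qF B D)) ≠ 0 := NumberField.RingOfIntegers.coe_ne_zero_iff.2 hαm_ne
  have hσαm_ne : σ ((αm : qF B D)) ≠ 0 := fun h => hαmF_ne (by
    have := congrArg σ.symm h
    simpa using this)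
  have hcP : c ∉ P (m + 1) := isSUnit_coe_not_mem hcS hPp hPb hPnotS
  have hgP : g ∉ P (m + 1) := isSUnit_coe_not_mem hg hPp hPb hPnotS
  have hcgP : c * g ∉ P (m + 1) := fun h => ((hPp.mem_or_mem h).elim hcP hgP)
  obtain ⟨ct, hctCm, hmem⟩ := hCrep (c * g) hcgP
  obtain ⟨hctS, hctb, hσctb⟩ := hCsub ct hctCm
  have hct0 : (ct : qF B D) ≠ 0 := hctS.1
  by_cases h0 : c * g = ct
  · refine ⟨ct, hctCm, 1, Subgroup.one_mem _, ?_⟩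
    have := congrArg (fun z : 𝓞 (qF B D) => (z : qF B D)) h0
    push_cast at this
    simpa using this
  · rw [hαm] at hmem
    obtain ⟨w, hw⟩ := Ideal.mem_span_singleton'.mp hmem
    have hwne : w ≠ 0 := by
      intro h
      apply h0
      rw [h, zero_mul] at hw
      exact (sub_eq_zero.mp hw.symm)
    -- coerced equation
    have hwF : (w : qF B D) * ((αm : qF B D)) = (c : qF B D) * (g : qF B D) - (ct : qF B D) := by
      have := congrArg (fun z : 𝓞 (qF B D) => (z : qF B D)) hw
      push_cast at this
      exact this
    set N : ℝ := (Nat.card (𝓞 (qF B D) ⧸ P (m + 1)) : ℝ) with hN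
    have hNnn : (0:ℝ) ≤ N := Nat.cast_nonneg _
    set x : ℝ := N ^ ((1 : ℝ) / 8) with hxdef
    have hxnn : 0 ≤ x := Real.rpow_nonneg hNnn _
    -- bound |w|
    have hαabs : 0 < qAbs ((αm : qF B D)) := qAbs_pos hαmF_ne
    have hσαabs : 0 < qAbs (σ ((αm : qF B D))) := qAbs_pos hσαm_ne
    have hwbound : qAbs ((w : qF B D)) ≤ c₁ * (δ * x + 1) := by
      have h1 : qAbs ((w : qF B D)) * qAbs ((αm : qF B D))
          = qAbs ((c : qF B D) * (g : qF B D) - (ct : qF B D)) := by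
        rw [← qAbs_mul, hwF]
      have h2 : qAbs ((c : qF B D) * (g : qF B D) - (ct : qF B D))
          ≤ qAbs ((c : qF B D)) * qAbs ((g : qF B D)) + qAbs ((ct : qF B D)) := by
        calc qAbs ((c : qF B D) * (g : qF B D) - (ct : qF B D))
            ≤ qAbs ((c : qF B D) * (g : qF B D)) + qAbs ((ct : qF B D)) := qAbs_sub_le _ _
          _ = qAbs ((c : qF B D)) * qAbs ((g : qF B D)) + qAbs ((ct : qF B D)) := by
              rw [qAbs_mul]
      have h3 : qAbs ((c : qF B D)) * qAbs ((g : qF B D)) + qAbs ((ct : qF B D))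
          ≤ c₁ * qAbs ((αm : qF B D)) * (δ * x) + c₁ * qAbs ((αm : qF B D)) := by
        have := mul_le_mul hcb hgabs (qAbs_nonneg _) (by positivity)
        linarith [this, hctb]
      have h4 : qAbs ((w : qF B D)) * qAbs ((αm : qF B D))
          ≤ (c₁ * (δ * x + 1)) * qAbs ((αm : qF B D)) := by
        rw [h1]
        calc qAbs ((c : qF B D) * (g : qF B D) - (ct : qF B D))
            ≤ c₁ * qAbs ((αm : qF B D)) * (δ * x) + c₁ * qAbs ((αm : qF B D)) :=
              le_trans h2 h3
          _ = (c₁ * (δ * x + 1)) * qAbs ((αm : qF B D)) := by ring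
      exact le_of_mul_le_mul_right (by linarith [h4]) hαabs
    have hσwbound : qAbs (σ ((w : qF B D))) ≤ c₂ * (δ * x + 1) := by
      have hσwF : σ ((w : qF B D)) * σ ((αm : qF B D))
          = σ ((c : qF B D)) * σ ((g : qF B D)) - σ ((ct : qF B D)) := by
        rw [← map_mul, hwF, map_sub, map_mul]
      have h1 : qAbs (σ ((w : qF B D))) * qAbs (σ ((αm : qF B D)))
          = qAbs (σ ((c : qF B D)) * σ ((g : qF B D)) - σ ((ct : qF B D))) := by
        rw [← qAbs_mul, hσwF]
      have h2 := qAbs_sub_le (σ ((c : qF B D)) * σ ((g : qF B D))) (σ ((ct : qF B D)))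
      rw [qAbs_mul] at h2
      have h3 := mul_le_mul hσcb hσgabs (qAbs_nonneg _) (by positivity)
      have h4 : qAbs (σ ((w : qF B D))) * qAbs (σ ((αm : qF B D)))
          ≤ (c₂ * (δ * x + 1)) * qAbs (σ ((αm : qF B D))) := by
        rw [h1]
        calc qAbs (σ ((c : qF B D)) * σ ((g : qF B D)) - σ ((ct : qF B D)))
            ≤ qAbs (σ ((c : qF B D))) * qAbs (σ ((g : qF B D))) + qAbs (σ ((ct : qF B D))) := h2
          _ ≤ c₂ * qAbs (σ ((αm : qF B D))) * (δ * x) + c₂ * qAbs (σ ((αm : qF B D))) := by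
              linarith [h3, hσctb]
          _ = (c₂ * (δ * x + 1)) * qAbs (σ ((αm : qF B D))) := by ring
      exact le_of_mul_le_mul_right (by linarith [h4]) hσαabs
    -- norm bound
    have hNw : (Nat.card (𝓞 (qF B D) ⧸ Ideal.span {w}) : ℝ) < N := by
      rw [qcard_span hB hC hD σ hσ w]
      have hb1 : qAbs ((w : qF B D)) ^ 2 ≤ (c₁ * (δ * x + 1)) ^ 2 :=
        pow_le_pow_left₀ (qAbs_nonneg _) hwbound 2
      have hb2 : qAbs (σ ((w : qF B D))) ^ 2 ≤ (c₂ * (δ * x + 1)) ^ 2 :=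
        pow_le_pow_left₀ (qAbs_nonneg _) hσwbound 2
      have hb : qAbs ((w : qF B D)) ^ 2 * qAbs (σ ((w : qF B D))) ^ 2
          ≤ (c₁ * (δ * x + 1)) ^ 2 * (c₂ * (δ * x + 1)) ^ 2 :=
        mul_le_mul hb1 hb2 (by positivity) (by positivity)
      have hnum := qnumeric c₁ c₂ δ N hc₁ hc₂ hδ hNnn hbig
      calc qAbs ((w : qF B D)) ^ 2 * qAbs (σ ((w : qF B D))) ^ 2
          ≤ (c₁ * (δ * x + 1)) ^ 2 * (c₂ * (δ * x + 1)) ^ 2 := hb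
        _ = c₁ ^ 2 * c₂ ^ 2 * (δ * x + 1) ^ 4 := by ring
        _ < N := hnum
    -- w avoids all primes outside S
    have hwprimes : ∀ Q : Ideal (𝓞 (qF B D)), Q.IsPrime → Q ≠ ⊥ → Q ∉ S → w ∉ Q := by
      intro Q hQp hQb hQS hwQ
      obtain ⟨i, hi1, hiQ⟩ := hPsurj Q hQp hQb
      have him : m + 1 ≤ i := by
        by_contra hcon
        push_neg at hcon
        exact hQS ⟨i, hi1, by omega, hiQ.symm⟩
      have hmono := hPmono (m + 1) i (by omega) him
      rw [hiQ] at hmono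
      have hle := qcard_le hB hC hD w hwne Q hwQ
      have : (Nat.card (𝓞 (qF B D) ⧸ P (m + 1)) : ℝ)
          ≤ (Nat.card (𝓞 (qF B D) ⧸ Ideal.span {w}) : ℝ) := by
        exact_mod_cast le_trans hmono hle
      linarith [hNw, this]
    have hwS : IsSUnit S ((w : qF B D)) := isSUnit_coe hwne hwprimes
    -- build u
    have hcgF_ne : (c : qF B D) * (g : qF B D) ≠ 0 := mul_ne_zero hcS.1 hg.1
    have huval_ne : (c : qF B D) * (g : qF B D) / (ct : qF B D) ≠ 0 :=
      div_ne_zero hcgF_ne hct0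
    refine ⟨ct, hctCm, Units.mk0 _ huval_ne, ?_, ?_⟩
    · apply Subgroup.subset_closure
      refine ⟨(hcS.mul hg).div hctS, (w : qF B D) / (ct : qF B D), hwS.div hctS, ?_⟩
      show (c : qF B D) * (g : qF B D) / (ct : qF B D)
        = 1 + ((αm : qF B D)) * ((w : qF B D) / (ct : qF B D))
      field_simp
      linear_combination -hwF
    · show (c : qF B D) * (g : qF B D)
        = (ct : qF B D) * ((c : qF B D) * (g : qF B D) / (ct : qF B D))
      field_simp
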